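/- Let Z, A, M, Y be finitely-valued with strictly positive joint pmf p that is the margin of the structural model p(z)·p(u)·p(a | z, u)·p(m | a, z)·p(y | m, u). Then for every a, Σ_{z,m,y} p(z)·p(m | a, z)·[Σ_{a'} p(a' | z)·p(y | z, a', m)]·y equals Σ_{z,m,y} p(z)·p(m | a, z)·q_Y(y | m)·y where q_Y(y | m) = Σ_u p(u)·p(y | m, u); and if additionally p(m | a, z) = p(m | a) for all z (no Z→M edge), this quantity reduces to Pearl's front-door formula Σ_m p(m | a)·Σ_{a'} p(a')·Σ_y p(y | a', m)·y. -/
import Mathlib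


open Finset

/-- In the structural front-door model with anchor `Z` and hidden `U`, (i)
the generalized front-door functional equals the same expression with the `z`-free kernel
`q_Y(y | m) = ∑ u, p(u)·p(y | m, u)`; and (ii) if additionally `p(m | a, z)` does not
depend on `z` (no `Z → M` edge), it reduces to Pearl's classical front-door formula. -/
theorem stmt_18
    {Z U A M Y : Type*} [Fintype Z] [Fintype U] [Fintype A] [Fintype M] [Fintype Y]
    (f : Y → ℝ)
    (pz : Z → ℝ) (pu : U → ℝ) (pa : A → Z → U → ℝ)
    (pm : M → A → Z → ℝ) (py : Y → M → U → ℝ)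
    (hpz : ∀ z, 0 < pz z) (hpu : ∀ u, 0 < pu u)
    (hpa : ∀ a z u, 0 < pa a z u) (hpm : ∀ m a z, 0 < pm m a z)
    (hpy : ∀ y m u, 0 < py y m u)
    (hpzn : ∑ z, pz z = 1) (hpun : ∑ u, pu u = 1)
    (hpan : ∀ z u, ∑ a, pa a z u = 1) (hpmn : ∀ a z, ∑ m, pm m a z = 1)
    (hpyn : ∀ m u, ∑ y, py y m u = 1)
    (p : Z → A → M → Y → ℝ)
    (hp : ∀ z a m y, p z a m y = ∑ u, pz z * pu u * pa a z u * pm m a z * py y m u)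
    (pAo : A → Z → ℝ)
    (hpAo : ∀ a z, pAo a z = (∑ m, ∑ y, p z a m y) / (∑ a', ∑ m, ∑ y, p z a' m y))
    (pYo : Y → Z → A → M → ℝ)
    (hpYo : ∀ y z a m, pYo y z a m = p z a m y / (∑ y', p z a m y'))
    (qYm : Y → M → ℝ)
    (hqYm : ∀ y m, qYm y m = ∑ u, pu u * py y m u)
    -- observed quantities for the classical front-door formula
    (pMA : M → A → ℝ)
    (hpMA : ∀ m a, pMA m a =
      (∑ z, ∑ y, p z a m y) / (∑ z, ∑ m', ∑ y, p z a m' y))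
    (pAmarg : A → ℝ)
    (hpAmarg : ∀ a, pAmarg a = ∑ z, ∑ m, ∑ y, p z a m y)
    (pYAM : Y → A → M → ℝ)
    (hpYAM : ∀ y a m, pYAM y a m =
      (∑ z, p z a m y) / (∑ z, ∑ y', p z a m y')) :
    ∀ a : A,
      ((∑ z, ∑ m, ∑ y, pz z * pm m a z * (∑ a', pAo a' z * pYo y z a' m) * f y) =
        ∑ z, ∑ m, ∑ y, pz z * pm m a z * qYm y m * f y) ∧
      ((∀ m a' z z', pm m a' z = pm m a' z') →
        (∑ z, ∑ m, ∑ y, pz z * pm m a z * (∑ a', pAo a' z * pYo y z a' m) * f y) =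
        ∑ m, pMA m a * (∑ a', pAmarg a' * (∑ y, pYAM y a' m * f y))) := by

  -- nonemptiness
  have hZne : Nonempty Z := by
    by_contra h
    rw [not_nonempty_iff] at h
    simp at hpzn
  have hUne : Nonempty U := by
    by_contra h
    rw [not_nonempty_iff] at h
    simp at hpun
  -- basic factorization
  have h1 : ∀ z a m y, p z a m y =
      pz z * pm m a z * ∑ u, pu u * pa a z u * py y m u := by
    intro z a m y
    rw [hp, Finset.mul_sum]
    exact Finset.sum_congr rfl fun u _ => by ring
  -- g z a := ∑ u, pu u * pa a z u
  have hgpos : ∀ z a, 0 < ∑ u, pu u * pa a z u := fun z a =>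
    Finset.sum_pos (fun u _ => mul_pos (hpu u) (hpa a z u)) Finset.univ_nonempty
  have h2 : ∀ z a m, ∑ y, p z a m y = pz z * pm m a z * ∑ u, pu u * pa a z u := by
    intro z a m
    simp only [h1]
    rw [← Finset.mul_sum]
    congr 1
    rw [Finset.sum_comm]
    refine Finset.sum_congr rfl fun u _ => ?_
    rw [← Finset.mul_sum, hpyn, mul_one]
  have h3 : ∀ z a, ∑ m, ∑ y, p z a m y = pz z * ∑ u, pu u * pa a z u := by
    intro z a
    simp only [h2]
    have : ∀ m, pz z * pm m a z * (∑ u, pu u * pa a z u)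
        = (pz z * ∑ u, pu u * pa a z u) * pm m a z := fun m => by ring
    simp only [this]
    rw [← Finset.mul_sum, hpmn, mul_one]
  have hgsum : ∀ z, ∑ a', ∑ u, pu u * pa a' z u = 1 := by
    intro z
    rw [Finset.sum_comm]
    have : ∀ u, ∑ a', pu u * pa a' z u = pu u := fun u => by
      rw [← Finset.mul_sum, hpan, mul_one]
    simp only [this, hpun]
  have h4 : ∀ z, ∑ a', ∑ m, ∑ y, p z a' m y = pz z := by
    intro z
    simp only [h3]
    rw [← Finset.mul_sum, hgsum, mul_one]
  have h5 : ∀ a z, pAo a z = ∑ u, pu u * pa a z u := by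
    intro a z
    rw [hpAo, h3, h4 z, mul_div_cancel_left₀ _ (hpz z).ne']
  have h6 : ∀ y z a m, pYo y z a m =
      (∑ u, pu u * pa a z u * py y m u) / (∑ u, pu u * pa a z u) := by
    intro y z a m
    rw [hpYo, h1, h2, mul_div_mul_left _ _ (mul_pos (hpz z) (hpm m a z)).ne']
  have hTsum : ∀ z m y, ∑ a', ∑ u, pu u * pa a' z u * py y m u = qYm y m := by
    intro z m y
    rw [hqYm, Finset.sum_comm]
    refine Finset.sum_congr rfl fun u _ => ?_
    have : ∀ a', pu u * pa a' z u * py y m u = (pu u * py y m u) * pa a' z u :=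
      fun a' => by ring
    simp only [this]
    rw [← Finset.mul_sum, hpan, mul_one]
  have h7 : ∀ z m y, ∑ a', pAo a' z * pYo y z a' m = qYm y m := by
    intro z m y
    have : ∀ a', pAo a' z * pYo y z a' m = ∑ u, pu u * pa a' z u * py y m u := by
      intro a'
      rw [h5, h6, mul_comm, div_mul_cancel₀ _ (hgpos z a').ne']
    simp only [this]
    exact hTsum z m y
  intro a
  have hpart1 : (∑ z, ∑ m, ∑ y, pz z * pm m a z * (∑ a', pAo a' z * pYo y z a' m) * f y)
      = ∑ z, ∑ m, ∑ y, pz z * pm m a z * qYm y m * f y := by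
    refine Finset.sum_congr rfl fun z _ => Finset.sum_congr rfl fun m _ =>
      Finset.sum_congr rfl fun y _ => ?_
    rw [h7]
  refine ⟨hpart1, fun h => ?_⟩
  have hGpos : ∀ a', 0 < ∑ z, pz z * ∑ u, pu u * pa a' z u := fun a' =>
    Finset.sum_pos (fun z _ => mul_pos (hpz z) (hgpos z a')) Finset.univ_nonempty
  obtain ⟨z₀⟩ := hZne
  -- LHS equals the common value
  have hL : (∑ z, ∑ m, ∑ y, pz z * pm m a z * (∑ a', pAo a' z * pYo y z a' m) * f y)
      = ∑ m, pm m a z₀ * ∑ y, qYm y m * f y := by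
    rw [hpart1]
    have step : ∀ z, (∑ m, ∑ y, pz z * pm m a z * qYm y m * f y)
        = pz z * ∑ m, pm m a z₀ * ∑ y, qYm y m * f y := by
      intro z
      rw [Finset.mul_sum]
      refine Finset.sum_congr rfl fun m _ => ?_
      rw [Finset.mul_sum, Finset.mul_sum]
      refine Finset.sum_congr rfl fun y _ => ?_
      rw [h m a z z₀]; ring
    simp only [step]
    rw [← Finset.sum_mul, hpzn, one_mul]
  rw [hL]
  -- observed quantities
  have hMA' : ∀ m, pMA m a = pm m a z₀ := by
    intro m
    rw [hpMA]
    have hnum : ∑ z, ∑ y, p z a m y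
        = pm m a z₀ * ∑ z, pz z * ∑ u, pu u * pa a z u := by
      rw [Finset.mul_sum]
      refine Finset.sum_congr rfl fun z _ => ?_
      rw [h2, h m a z z₀]; ring
    have hden : ∑ z, ∑ m', ∑ y, p z a m' y
        = ∑ z, pz z * ∑ u, pu u * pa a z u :=
      Finset.sum_congr rfl fun z _ => h3 z a
    rw [hnum, hden, mul_div_assoc, div_self (hGpos a).ne', mul_one]
  have hAm : ∀ a', pAmarg a' = ∑ z, pz z * ∑ u, pu u * pa a' z u := by
    intro a'
    rw [hpAmarg]
    exact Finset.sum_congr rfl fun z _ => h3 z a'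
  have hYAM : ∀ y a' m, pYAM y a' m
      = (∑ z, pz z * ∑ u, pu u * pa a' z u * py y m u)
        / (∑ z, pz z * ∑ u, pu u * pa a' z u) := by
    intro y a' m
    rw [hpYAM]
    have hnum : ∑ z, p z a' m y
        = pm m a' z₀ * ∑ z, pz z * ∑ u, pu u * pa a' z u * py y m u := by
      rw [Finset.mul_sum]
      refine Finset.sum_congr rfl fun z _ => ?_
      rw [h1, h m a' z z₀]; ring
    have hden : ∑ z, ∑ y', p z a' m y'
        = pm m a' z₀ * ∑ z, pz z * ∑ u, pu u * pa a' z u := by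
      rw [Finset.mul_sum]
      refine Finset.sum_congr rfl fun z _ => ?_
      rw [h2, h m a' z z₀]; ring
    rw [hnum, hden, mul_div_mul_left _ _ (hpm m a' z₀).ne']
  refine (Finset.sum_congr rfl fun m _ => ?_).symm
  rw [hMA' m]
  congr 1
  calc ∑ a', pAmarg a' * ∑ y, pYAM y a' m * f y
      = ∑ a', ∑ y, (∑ z, pz z * ∑ u, pu u * pa a' z u * py y m u) * f y := by
        refine Finset.sum_congr rfl fun a' _ => ?_
        rw [hAm, Finset.mul_sum]
        refine Finset.sum_congr rfl fun y _ => ?_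
        rw [hYAM]
        have hG := (hGpos a').ne'
        field_simp
    _ = ∑ y, qYm y m * f y := by
        rw [Finset.sum_comm]
        refine Finset.sum_congr rfl fun y _ => ?_
        rw [← Finset.sum_mul]
        congr 1
        rw [Finset.sum_comm]
        have : ∀ z, ∑ a', pz z * ∑ u, pu u * pa a' z u * py y m u
            = pz z * qYm y m := fun z => by
          rw [← Finset.mul_sum, hTsum]
        simp only [this]
        rw [← Finset.sum_mul, hpzn, one_mul]
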